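/- arXiv:0801.0963 — 4 statements merged into one kernel-verified Lean document; each statement's English description precedes it below -/
import Mathlib

section
/- The sum over k from 3 to n−1 of the expected number of intervals of length k in a uniformly random permutation of length n tends to 0 as n → ∞. Consequently, the expected total number of proper intervals (of lengths 2 through n−1) tends to 2. -/
def Contig {n : ℕ} (s : Finset (Fin n)) : Prop := ∃ a b : Fin n, s = Finset.Icc a b

def IsPInterval {n : ℕ} (π : Equiv.Perm (Fin n)) (s : Finset (Fin n)) : Prop :=
  Contig s ∧ Contig (s.image π)

/-- The expected number of intervals of length `k` in a uniformly random
permutation of length `n`. -/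
noncomputable def EX (n k : ℕ) : ℝ :=
  (∑ π : Equiv.Perm (Fin n),
    ({s : Finset (Fin n) | IsPInterval π s ∧ s.card = k}.ncard : ℝ)) / (n.factorial : ℝ)

open Finset Nat Filter

section Counting

variable {n : ℕ}

lemma key_mem {s t : Finset (Fin n)} {π : Equiv.Perm (Fin n)} (hπ : s.image π = t) (x : Fin n) :
    x ∈ s ↔ π x ∈ t := by
  rw [← hπ]
  simp [Finset.mem_image, π.injective.eq_iff]

lemma key_mem' {s t : Finset (Fin n)} {π : Equiv.Perm (Fin n)} (hπ : s.image π = t) (y : Fin n) :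
    π.symm y ∈ s ↔ y ∈ t := by
  rw [key_mem hπ (π.symm y)]; simp

noncomputable def permEquiv (s t : Finset (Fin n)) :
    {π : Equiv.Perm (Fin n) // s.image π = t} ≃
      (({x // x ∈ s} ≃ {x // x ∈ t}) × ({x // x ∉ s} ≃ {x // x ∉ t})) where
  toFun := fun ⟨π, hπ⟩ =>
    ⟨{ toFun := fun x => ⟨π x, (key_mem hπ x).1 x.2⟩
       invFun := fun y => ⟨π.symm y, (key_mem' hπ y).2 y.2⟩
       left_inv := fun x => by simp
       right_inv := fun y => by simp },
     { toFun := fun x => ⟨π x, fun h => x.2 ((key_mem hπ x).2 h)⟩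
       invFun := fun y => ⟨π.symm y, fun h => y.2 ((key_mem' hπ y).1 h)⟩
       left_inv := fun x => by simp
       right_inv := fun y => by simp }⟩
  invFun := fun ⟨f, g⟩ =>
    ⟨(Equiv.sumCompl (· ∈ s)).symm.trans ((f.sumCongr g).trans (Equiv.sumCompl (· ∈ t))), by
      ext y
      simp only [Finset.mem_image]
      constructor
      · rintro ⟨x, hx, rfl⟩
        simp [Equiv.sumCompl_symm_apply_of_pos hx, (f ⟨x, hx⟩).2]
      · intro hy
        refine ⟨f.symm ⟨y, hy⟩, (f.symm ⟨y, hy⟩).2, ?_⟩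
        simp [Equiv.sumCompl_symm_apply_of_pos (f.symm ⟨y, hy⟩).2]⟩
  left_inv := fun ⟨π, hπ⟩ => by
    ext x
    by_cases hx : x ∈ s
    · simp [Equiv.sumCompl_symm_apply_of_pos hx]
    · simp [Equiv.sumCompl_symm_apply_of_neg hx]
  right_inv := fun ⟨f, g⟩ => by
    refine Prod.ext ?_ ?_
    · ext x
      simp [Equiv.sumCompl_symm_apply_of_pos x.2]
    · ext x
      simp [Equiv.sumCompl_symm_apply_of_neg x.2]

open scoped Classical in
lemma card_perm_image (s t : Finset (Fin n)) (hc : s.card = t.card) :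
    (univ.filter fun π : Equiv.Perm (Fin n) => s.image π = t).card
      = (s.card)! * (n - s.card)! := by
  rw [← Fintype.card_subtype, Fintype.card_congr (permEquiv s t), Fintype.card_prod,
    Fintype.card_equiv (Fintype.equivOfCardEq (by simp [hc])),
    Fintype.card_equiv (Fintype.equivOfCardEq ?_)]
  · rw [Fintype.card_coe, Fintype.card_subtype_compl, Fintype.card_coe, Fintype.card_fin]
  · simp only [Fintype.card_subtype_compl, Fintype.card_coe, Fintype.card_fin, hc]

lemma min'_Icc (a b : Fin n) (hab : a ≤ b) (h : (Finset.Icc a b).Nonempty) :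
    (Finset.Icc a b).min' h = a :=
  le_antisymm (Finset.min'_le _ _ (Finset.mem_Icc.2 ⟨le_refl a, hab⟩))
    (Finset.le_min' _ _ _ (fun _ hy => (Finset.mem_Icc.1 hy).1))

set_option maxHeartbeats 800000 in
open scoped Classical in
lemma card_contig {k : ℕ} (hk1 : 1 ≤ k) (hkn : k ≤ n) :
    (univ.filter fun s : Finset (Fin n) => Contig s ∧ s.card = k).card = n - k + 1 := by
  rw [← Finset.card_range (n - k + 1)]
  refine Finset.card_bij' (fun s hs => ((s.min' (Finset.card_pos.1 (by
      rw [(Finset.mem_filter.1 hs).2.2]; omega)) : Fin n) : ℕ))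
    (fun i hi => Finset.Icc ⟨i, by have := Finset.mem_range.1 hi; omega⟩
      ⟨i + k - 1, by have := Finset.mem_range.1 hi; omega⟩) ?_ ?_ ?_ ?_
  · intro s hs
    obtain ⟨⟨a, b, rfl⟩, hcard⟩ := (Finset.mem_filter.1 hs).2
    rw [Fin.card_Icc] at hcard
    have hab : a ≤ b := by
      rcases le_or_gt a b with h | h
      · exact h
      · exfalso; have : (b:ℕ) < a := h; omega
    rw [min'_Icc a b hab]
    have hb : (b : ℕ) < n := b.isLt
    exact Finset.mem_range.2 (by have : (a:ℕ) ≤ b := hab; omega)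
  · intro i hi
    refine Finset.mem_filter.2 ⟨Finset.mem_univ _, ⟨_, _, rfl⟩, ?_⟩
    rw [Fin.card_Icc]
    have := Finset.mem_range.1 hi
    dsimp only
    omega
  · intro s hs
    obtain ⟨⟨a, b, rfl⟩, hcard⟩ := (Finset.mem_filter.1 hs).2
    rw [Fin.card_Icc] at hcard
    have hab : a ≤ b := by
      rcases le_or_gt a b with h | h
      · exact h
      · exfalso; have : (b:ℕ) < a := h; omega
    have hmin := min'_Icc a b hab (Finset.card_pos.1 (by rw [Fin.card_Icc]; omega))
    have hab' : (a:ℕ) ≤ b := hab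
    exact congrArg₂ Finset.Icc (Fin.ext (by simp [hmin])) (Fin.ext (by simp [hmin]; omega))
  · intro i hi
    have h1 : (⟨i, by have := Finset.mem_range.1 hi; omega⟩ : Fin n)
        ≤ ⟨i + k - 1, by have := Finset.mem_range.1 hi; omega⟩ := by
      simp [Fin.le_def]; omega
    rw [min'_Icc _ _ h1]

open scoped Classical in
lemma sum_card {k : ℕ} (hk1 : 1 ≤ k) (hkn : k ≤ n) :
    ∑ π : Equiv.Perm (Fin n),
      (univ.filter fun s : Finset (Fin n) => IsPInterval π s ∧ s.card = k).card
      = (n - k + 1) ^ 2 * (k ! * (n - k)!) := by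
  set A := univ.filter fun s : Finset (Fin n) => Contig s ∧ s.card = k with hA
  have h1 : ∀ π : Equiv.Perm (Fin n),
      (univ.filter fun s : Finset (Fin n) => IsPInterval π s ∧ s.card = k)
        = A.filter fun s => Contig (s.image π) := by
    intro π
    rw [hA, Finset.filter_filter]
    apply Finset.filter_congr
    intro s _
    unfold IsPInterval
    tauto
  calc ∑ π : Equiv.Perm (Fin n),
        (univ.filter fun s : Finset (Fin n) => IsPInterval π s ∧ s.card = k).card
      = ∑ π : Equiv.Perm (Fin n), ∑ s ∈ A, if Contig (s.image π) then 1 else 0 := by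
        simp_rw [h1, Finset.card_filter]
    _ = ∑ s ∈ A, ∑ π : Equiv.Perm (Fin n), if Contig (s.image π) then 1 else 0 :=
        Finset.sum_comm
    _ = ∑ s ∈ A, (univ.filter fun π : Equiv.Perm (Fin n) => Contig (s.image π)).card := by
        simp_rw [Finset.card_filter]
    _ = ∑ s ∈ A, ∑ t ∈ A, (univ.filter fun π : Equiv.Perm (Fin n) => s.image π = t).card := by
        refine Finset.sum_congr rfl fun s hs => ?_
        have hsk : s.card = k := (Finset.mem_filter.1 hs).2.2
        have := Finset.card_eq_sum_card_fiberwise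
          (f := fun π : Equiv.Perm (Fin n) => s.image π)
          (s := univ.filter fun π : Equiv.Perm (Fin n) => Contig (s.image π)) (t := A) ?_
        · rw [this]
          refine Finset.sum_congr rfl fun t ht => ?_
          congr 1
          rw [Finset.filter_filter]
          apply Finset.filter_congr
          intro π _
          constructor
          · exact fun h => h.2
          · intro h
            exact ⟨h ▸ (Finset.mem_filter.1 ht).2.1, h⟩
        · intro π hπ
          refine Finset.mem_filter.2 ⟨Finset.mem_univ _, (Finset.mem_filter.1 hπ).2, ?_⟩
          rw [Finset.card_image_of_injective _ π.injective, hsk]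
    _ = ∑ s ∈ A, ∑ t ∈ A, k ! * (n - k)! := by
        refine Finset.sum_congr rfl fun s hs => Finset.sum_congr rfl fun t ht => ?_
        have hsk : s.card = k := (Finset.mem_filter.1 hs).2.2
        have htk : t.card = k := (Finset.mem_filter.1 ht).2.2
        rw [card_perm_image s t (by rw [hsk, htk]), hsk]
    _ = (n - k + 1) ^ 2 * (k ! * (n - k)!) := by
        rw [Finset.sum_const, Finset.sum_const, card_contig hk1 hkn, smul_eq_mul, smul_eq_mul,
          ← mul_assoc, sq]

end Counting

section Analysis

lemma choose_mono_half {n a b : ℕ} (hab : a ≤ b) (hb : 2 * b ≤ n) :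
    n.choose a ≤ n.choose b := by
  induction b with
  | zero => simp [Nat.le_zero.1 hab]
  | succ m ih =>
    rcases Nat.lt_or_ge a (m + 1) with h | h
    · have h1 : m < n / 2 := by omega
      exact le_trans (ih (by omega) (by omega)) (Nat.choose_le_succ_of_lt_half_left h1)
    · have : a = m + 1 := by omega
      simp [this]

lemma choose_ge_of_between {n k c : ℕ} (hc : c ≤ k) (hk : k ≤ n - c) (hn : 2 * c ≤ n) :
    n.choose c ≤ n.choose k := by
  rcases le_or_gt (2 * k) n with h | h
  · exact choose_mono_half hc h
  · have hkn : k ≤ n := by omega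
    rw [← Nat.choose_symm hkn]
    exact choose_mono_half (by omega) (by omega)

lemma descFactorial_three (n : ℕ) : n.descFactorial 3 = (n - 2) * ((n - 1) * n) := by
  simp [Nat.descFactorial_succ, Nat.descFactorial_zero]

lemma descFactorial_five (n : ℕ) :
    n.descFactorial 5 = (n - 4) * ((n - 3) * ((n - 2) * ((n - 1) * n))) := by
  simp [Nat.descFactorial_succ, Nat.descFactorial_zero]

/-- The real-valued closed form of the expected number. -/
noncomputable def tR (n k : ℕ) : ℝ := ((n - k + 1 : ℕ) ^ 2 * (k ! * (n - k)!) : ℝ) / (n ! : ℝ)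

lemma tR_eq_choose {n k : ℕ} (hkn : k ≤ n) :
    tR n k = ((n - k + 1 : ℕ) ^ 2 : ℝ) / (n.choose k : ℝ) := by
  have hc : 0 < n.choose k := Nat.choose_pos hkn
  have hR : ((n.choose k : ℝ)) * (k ! : ℝ) * ((n - k)! : ℝ) = (n ! : ℝ) := by
    exact_mod_cast congrArg (Nat.cast (R := ℝ)) (Nat.choose_mul_factorial_mul_factorial hkn)
  rw [tR, div_eq_div_iff (by positivity) (Nat.cast_ne_zero.2 hc.ne')]
  rw [← hR]
  ring

lemma bound_low {n k : ℕ} (hn : 12 ≤ n) (h3 : 3 ≤ k) (h4 : k ≤ 4) :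
    tR n k ≤ 24 / n := by
  have hkn : k ≤ n := by omega
  rw [tR_eq_choose hkn]
  have hc : (n.choose 3 : ℕ) ≤ n.choose k := choose_ge_of_between h3 (by omega) (by omega)
  have h6 : 6 * n.choose 3 = (n - 2) * ((n - 1) * n) := by
    have h := Nat.descFactorial_eq_factorial_mul_choose n 3
    rw [descFactorial_three] at h
    have h3f : (3:ℕ)! = 6 := rfl
    rw [h3f] at h
    omega
  have key : (n - k + 1) ^ 2 * n * 6 ≤ 24 * (6 * n.choose 3) := by
    rw [h6]
    have h1 : n - k + 1 ≤ n - 2 := by omega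
    calc (n - k + 1) ^ 2 * n * 6 ≤ (n - 2) ^ 2 * n * 6 :=
          Nat.mul_le_mul_right _ (Nat.mul_le_mul_right _ (Nat.pow_le_pow_left h1 2))
      _ ≤ 24 * ((n - 2) * ((n - 1) * n)) := by
          obtain ⟨a, rfl⟩ : ∃ a, n = a + 12 := ⟨n - 12, by omega⟩
          have e1 : a + 12 - 2 = a + 10 := by omega
          have e2 : a + 12 - 1 = a + 11 := by omega
          rw [e1, e2]
          nlinarith [a.zero_le]
  have key2 : (n - k + 1) ^ 2 * n ≤ 24 * n.choose k := by
    have : (n - k + 1) ^ 2 * n ≤ 24 * n.choose 3 := by omega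
    calc (n - k + 1) ^ 2 * n ≤ 24 * n.choose 3 := this
      _ ≤ 24 * n.choose k := Nat.mul_le_mul_left _ hc
  rw [div_le_div_iff₀ (by exact_mod_cast Nat.choose_pos hkn) (by positivity)]
  calc ((n - k + 1 : ℕ) ^ 2 : ℝ) * n = (((n - k + 1) ^ 2 * n : ℕ) : ℝ) := by push_cast; ring
    _ ≤ ((24 * n.choose k : ℕ) : ℝ) := by exact_mod_cast key2
    _ = 24 * (n.choose k : ℝ) := by push_cast; ring

lemma bound_mid {n k : ℕ} (hn : 12 ≤ n) (h5 : 5 ≤ k) (h5' : k ≤ n - 5) :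
    tR n k ≤ 4000 / (n : ℝ) ^ 2 := by
  have hkn : k ≤ n := by omega
  rw [tR_eq_choose hkn]
  have hc : (n.choose 5 : ℕ) ≤ n.choose k := choose_ge_of_between h5 h5' (by omega)
  have h120 : 120 * n.choose 5 = (n - 4) * ((n - 3) * ((n - 2) * ((n - 1) * n))) := by
    have h := Nat.descFactorial_eq_factorial_mul_choose n 5
    rw [descFactorial_five] at h
    have h5f : (5:ℕ)! = 120 := rfl
    rw [h5f] at h
    omega
  have key2 : (n - k + 1) ^ 2 * n ^ 2 ≤ 4000 * n.choose k := by
    have key : ((n - k + 1) ^ 2 * n ^ 2) * 120 ≤ 4000 * (120 * n.choose 5) := by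
      rw [h120]
      obtain ⟨a, rfl⟩ : ∃ a, n = a + 12 := ⟨n - 12, by omega⟩
      have e1 : a + 12 - 1 = a + 11 := by omega
      have e2 : a + 12 - 2 = a + 10 := by omega
      have e3 : a + 12 - 3 = a + 9 := by omega
      have e4 : a + 12 - 4 = a + 8 := by omega
      rw [e1, e2, e3, e4]
      have h1 : a + 12 - k + 1 ≤ a + 8 := by omega
      calc ((a + 12 - k + 1) ^ 2 * (a + 12) ^ 2) * 120
          ≤ ((a + 8) ^ 2 * (a + 12) ^ 2) * 120 := by
            have := Nat.pow_le_pow_left h1 2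
            exact Nat.mul_le_mul_right _ (Nat.mul_le_mul_right _ this)
        _ ≤ 4000 * ((a + 8) * ((a + 9) * ((a + 10) * ((a + 11) * (a + 12))))) := by
            nlinarith [a.zero_le, Nat.zero_le (a*a), Nat.zero_le (a*a*a),
              Nat.zero_le (a*a*a*a), Nat.zero_le (a*a*a*a*a)]
    omega
  rw [div_le_div_iff₀ (by exact_mod_cast Nat.choose_pos hkn) (by positivity)]
  calc ((n - k + 1 : ℕ) ^ 2 : ℝ) * (n : ℝ) ^ 2 = (((n - k + 1) ^ 2 * n ^ 2 : ℕ) : ℝ) := by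
        push_cast; ring
    _ ≤ ((4000 * n.choose k : ℕ) : ℝ) := by exact_mod_cast key2
    _ = 4000 * (n.choose k : ℝ) := by push_cast; ring

lemma bound_high {n k : ℕ} (hn : 12 ≤ n) (h1 : n - 4 ≤ k) (h2 : k ≤ n - 1) :
    tR n k ≤ 25 / n := by
  have hkn : k ≤ n := by omega
  rw [tR_eq_choose hkn]
  have hc : (n.choose 1 : ℕ) ≤ n.choose k :=
    choose_ge_of_between (by omega) (by omega) (by omega)
  rw [Nat.choose_one_right] at hc
  have key2 : (n - k + 1) ^ 2 * n ≤ 25 * n.choose k := by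
    have h5 : n - k + 1 ≤ 5 := by omega
    calc (n - k + 1) ^ 2 * n ≤ 5 ^ 2 * n := Nat.mul_le_mul_right _ (Nat.pow_le_pow_left h5 2)
      _ = 25 * n := by ring
      _ ≤ 25 * n.choose k := Nat.mul_le_mul_left _ hc
  rw [div_le_div_iff₀ (by exact_mod_cast Nat.choose_pos hkn) (by positivity)]
  calc ((n - k + 1 : ℕ) ^ 2 : ℝ) * (n : ℝ) = (((n - k + 1) ^ 2 * n : ℕ) : ℝ) := by
        push_cast; ring
    _ ≤ ((25 * n.choose k : ℕ) : ℝ) := by exact_mod_cast key2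
    _ = 25 * (n.choose k : ℝ) := by push_cast; ring

lemma tail_sum_le {n : ℕ} (hn : 12 ≤ n) : ∑ k ∈ Icc 3 (n - 1), tR n k ≤ 5000 / n := by
  have hnR : (0:ℝ) < n := by positivity
  have e0 : Finset.Icc 3 (n - 1) = Finset.Ioc 2 (n - 1) := by
    rw [← Finset.Icc_add_one_left_eq_Ioc]; rfl
  have e1 : Finset.Ioc 2 (n - 1) = (Finset.Ioc 2 4 ∪ Finset.Ioc 4 (n - 5)) ∪
      Finset.Ioc (n - 5) (n - 1) := by
    ext x
    simp only [Finset.mem_Ioc, Finset.mem_union]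
    omega
  have d1 : Disjoint (Finset.Ioc 2 4) (Finset.Ioc 4 (n - 5) : Finset ℕ) := by
    rw [Finset.disjoint_left]
    intro a ha hb
    simp only [Finset.mem_Ioc] at ha hb
    omega
  have d2 : Disjoint (Finset.Ioc 2 4 ∪ Finset.Ioc 4 (n - 5))
      (Finset.Ioc (n - 5) (n - 1) : Finset ℕ) := by
    rw [Finset.disjoint_left]
    intro a ha hb
    simp only [Finset.mem_Ioc, Finset.mem_union] at ha hb
    omega
  rw [e0, e1, Finset.sum_union d2, Finset.sum_union d1]
  have b1 : ∑ k ∈ Finset.Ioc 2 4, tR n k ≤ 48 / n := by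
    calc ∑ k ∈ Finset.Ioc 2 4, tR n k ≤ (Finset.Ioc 2 4).card • (24 / (n:ℝ)) := by
          refine Finset.sum_le_card_nsmul _ _ _ fun k hk => ?_
          simp only [Finset.mem_Ioc] at hk
          exact bound_low hn (by omega) (by omega)
      _ = 48 / n := by norm_num [Nat.card_Ioc]; ring
  have b2 : ∑ k ∈ Finset.Ioc 4 (n - 5), tR n k ≤ 4000 / n := by
    calc ∑ k ∈ Finset.Ioc 4 (n - 5), tR n k
        ≤ (Finset.Ioc 4 (n - 5)).card • (4000 / (n:ℝ) ^ 2) := by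
          refine Finset.sum_le_card_nsmul _ _ _ fun k hk => ?_
          simp only [Finset.mem_Ioc] at hk
          exact bound_mid hn (by omega) (by omega)
      _ ≤ (n : ℝ) * (4000 / (n:ℝ) ^ 2) := by
          rw [nsmul_eq_mul]
          have : ((Finset.Ioc 4 (n - 5)).card : ℝ) ≤ (n : ℝ) := by
            rw [Nat.card_Ioc]
            have h' : n - 5 - 4 ≤ n := by omega
            exact_mod_cast h'
          exact mul_le_mul_of_nonneg_right this (by positivity)
      _ = 4000 / n := by field_simp
  have b3 : ∑ k ∈ Finset.Ioc (n - 5) (n - 1), tR n k ≤ 100 / n := by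
    calc ∑ k ∈ Finset.Ioc (n - 5) (n - 1), tR n k
        ≤ (Finset.Ioc (n - 5) (n - 1)).card • (25 / (n:ℝ)) := by
          refine Finset.sum_le_card_nsmul _ _ _ fun k hk => ?_
          simp only [Finset.mem_Ioc] at hk
          exact bound_high hn (by omega) (by omega)
      _ ≤ 4 * (25 / (n:ℝ)) := by
          rw [nsmul_eq_mul]
          have : ((Finset.Ioc (n - 5) (n - 1)).card : ℝ) ≤ 4 := by
            rw [Nat.card_Ioc]
            have h' : n - 1 - (n - 5) ≤ 4 := by omega
            exact_mod_cast h'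
          exact mul_le_mul_of_nonneg_right this (by positivity)
      _ = 100 / n := by ring
  have : (48:ℝ)/n + 4000/n + 100/n ≤ 5000/n := by
    rw [← add_div, ← add_div]
    gcongr
    norm_num
  linarith

end Analysis

section Main

lemma EX_eq {n k : ℕ} (hk1 : 1 ≤ k) (hkn : k ≤ n) : EX n k = tR n k := by
  classical
  unfold EX tR
  congr 1
  have hnc : ∀ π : Equiv.Perm (Fin n),
      ({s : Finset (Fin n) | IsPInterval π s ∧ s.card = k}.ncard : ℝ)
        = ((univ.filter fun s : Finset (Fin n) => IsPInterval π s ∧ s.card = k).card : ℝ) := by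
    intro π
    congr 1
    rw [Set.ncard_eq_toFinset_card']
    congr 1
    ext s
    simp [Set.mem_toFinset]
  rw [Finset.sum_congr rfl fun π _ => hnc π]
  rw [← Nat.cast_sum]
  rw [sum_card hk1 hkn]
  push_cast
  ring

lemma EX_nonneg (n k : ℕ) : 0 ≤ EX n k := by
  unfold EX
  apply div_nonneg _ (by positivity)
  exact Finset.sum_nonneg fun π _ => by positivity

lemma tR_two {n : ℕ} (hn : 2 ≤ n) : tR n 2 = 2 - 2 / n := by
  rw [tR_eq_choose (by omega)]
  have h2 : 2 * n.choose 2 = (n - 1) * n := by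
    have h := Nat.descFactorial_eq_factorial_mul_choose n 2
    have hd : n.descFactorial 2 = (n - 1) * n := by
      simp [Nat.descFactorial_succ, Nat.descFactorial_zero]
    have h2f : (2:ℕ)! = 2 := rfl
    rw [hd, h2f] at h
    omega
  have hn0 : (n:ℝ) ≠ 0 := by positivity
  have hn1 : (n:ℝ) - 1 ≠ 0 := by
    have : (2:ℝ) ≤ n := by exact_mod_cast hn
    linarith
  have hC : (n.choose 2 : ℝ) = ((n:ℝ) - 1) * n / 2 := by
    have := congrArg (Nat.cast (R := ℝ)) h2
    push_cast [Nat.cast_sub (by omega : 1 ≤ n)] at this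
    linarith
  have hsub : ((n - 2 + 1 : ℕ):ℝ) = (n:ℝ) - 1 := by
    have e : n - 2 + 1 = n - 1 := by omega
    rw [e, Nat.cast_sub (by omega)]
    norm_num
  rw [hsub, hC]
  field_simp

theorem stmt9' :
    Filter.Tendsto (fun n : ℕ => ∑ k ∈ Finset.Icc 3 (n - 1), EX n k)
      Filter.atTop (nhds 0) ∧
    Filter.Tendsto (fun n : ℕ => ∑ k ∈ Finset.Icc 2 (n - 1), EX n k)
      Filter.atTop (nhds 2) := by
  have hEXsum : ∀ n : ℕ, 12 ≤ n →
      ∑ k ∈ Finset.Icc 3 (n - 1), EX n k = ∑ k ∈ Finset.Icc 3 (n - 1), tR n k := by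
    intro n hn
    refine Finset.sum_congr rfl fun k hk => ?_
    simp only [Finset.mem_Icc] at hk
    exact EX_eq (by omega) (by omega)
  have hA : Filter.Tendsto (fun n : ℕ => ∑ k ∈ Finset.Icc 3 (n - 1), EX n k)
      Filter.atTop (nhds 0) := by
    refine tendsto_of_tendsto_of_tendsto_of_le_of_le' tendsto_const_nhds
      (tendsto_const_div_atTop_nhds_zero_nat 5000) ?_ ?_
    · exact Filter.Eventually.of_forall fun n =>
        Finset.sum_nonneg fun k _ => EX_nonneg n k
    · filter_upwards [Filter.eventually_ge_atTop 12] with n hn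
      rw [hEXsum n hn]
      exact tail_sum_le hn
  refine ⟨hA, ?_⟩
  have hB2 : Filter.Tendsto (fun n : ℕ => EX n 2) Filter.atTop (nhds 2) := by
    have hlim : Filter.Tendsto (fun n : ℕ => 2 - 2 / (n:ℝ)) Filter.atTop (nhds 2) := by
      have := (tendsto_const_nhds (x := (2:ℝ)) (f := Filter.atTop (α := ℕ))).sub
        (tendsto_const_div_atTop_nhds_zero_nat 2)
      simpa using this
    refine hlim.congr' ?_
    filter_upwards [Filter.eventually_ge_atTop 12] with n hn
    rw [← tR_two (by omega), EX_eq (by omega) (by omega)]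
  have hsplit : ∀ n : ℕ, 12 ≤ n →
      ∑ k ∈ Finset.Icc 2 (n - 1), EX n k
        = EX n 2 + ∑ k ∈ Finset.Icc 3 (n - 1), EX n k := by
    intro n hn
    have e2 : Finset.Icc 2 (n - 1) = Finset.Ioc 1 (n - 1) := by rw [← Finset.Icc_add_one_left_eq_Ioc]; rfl
    have e3 : Finset.Icc 3 (n - 1) = Finset.Ioc 2 (n - 1) := by rw [← Finset.Icc_add_one_left_eq_Ioc]; rfl
    have eu : Finset.Ioc 1 (n - 1) = Finset.Ioc 1 2 ∪ Finset.Ioc 2 (n - 1) := by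
      ext x
      simp only [Finset.mem_Ioc, Finset.mem_union]
      omega
    have hd : Disjoint (Finset.Ioc 1 2) (Finset.Ioc 2 (n - 1) : Finset ℕ) := by
      rw [Finset.disjoint_left]
      intro a ha hb
      simp only [Finset.mem_Ioc] at ha hb
      omega
    have es : Finset.Ioc 1 2 = ({2} : Finset ℕ) := by
      ext x
      simp only [Finset.mem_Ioc, Finset.mem_singleton]
      omega
    rw [e2, e3, eu, Finset.sum_union hd, es, Finset.sum_singleton]
  have := hB2.add hA
  rw [add_zero] at this
  refine this.congr' ?_
  filter_upwards [Filter.eventually_ge_atTop 12] with n hn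
  exact (hsplit n hn).symm

end Main

/-- The sum over `3 ≤ k ≤ n-1` of the expected numbers of intervals of length `k`
tends to 0; consequently the expected total number of proper intervals
(lengths 2 through n-1) tends to 2. -/
theorem stmt9 :
    Filter.Tendsto (fun n : ℕ => ∑ k ∈ Finset.Icc 3 (n - 1), EX n k)
      Filter.atTop (nhds 0) ∧
    Filter.Tendsto (fun n : ℕ => ∑ k ∈ Finset.Icc 2 (n - 1), EX n k)
      Filter.atTop (nhds 2) := by
  exact stmt9'
end

section
/- For 4 ≤ k ≤ n−2, the expected number of intervals of length k in a uniformly random permutation of length n satisfies E[X_k] ≤ 24/n². -/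
open scoped Classical

private lemma fiber_card_le {n k : ℕ} (s t : Finset (Fin n)) (hs : s.card = k)
    (ht : t.card = k) :
    (Finset.univ.filter fun π : Equiv.Perm (Fin n) => s.image π = t).card
      ≤ k.factorial * (n - k).factorial := by
  set A := Finset.univ.filter fun π : Equiv.Perm (Fin n) => s.image π = t with hA
  have himg : ∀ π : Equiv.Perm (Fin n), π ∈ A → s.image π = t := by
    intro π hπ; simpa [hA] using hπ
  have hmem1 : ∀ (π : Equiv.Perm (Fin n)), π ∈ A → ∀ x : Fin n, x ∈ s → π x ∈ t := by
    intro π hπ x hx; rw [← himg π hπ]; exact Finset.mem_image_of_mem _ hx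
  have hmem2 : ∀ (π : Equiv.Perm (Fin n)), π ∈ A → ∀ x : Fin n, x ∈ sᶜ → π x ∈ tᶜ := by
    intro π hπ x hx
    rw [Finset.mem_compl] at hx ⊢
    intro hxt
    rw [← himg π hπ] at hxt
    obtain ⟨y, hy, hyx⟩ := Finset.mem_image.mp hxt
    exact hx (by rwa [← π.injective hyx])
  let F : {π : Equiv.Perm (Fin n) // π ∈ A} →
      ({x // x ∈ s} ↪ {x // x ∈ t}) × ({x // x ∈ sᶜ} ↪ {x // x ∈ tᶜ}) :=
    fun π =>
      ⟨⟨fun x => ⟨π.1 x.1, hmem1 π.1 π.2 x.1 x.2⟩, by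
          intro a b hab
          exact Subtype.ext (π.1.injective (congrArg Subtype.val hab))⟩,
       ⟨fun x => ⟨π.1 x.1, hmem2 π.1 π.2 x.1 x.2⟩, by
          intro a b hab
          exact Subtype.ext (π.1.injective (congrArg Subtype.val hab))⟩⟩
  have hFinj : Function.Injective F := by
    intro π π' h
    have h1 := congrArg Prod.fst h
    have h2 := congrArg Prod.snd h
    apply Subtype.ext
    apply Equiv.ext
    intro x
    by_cases hx : x ∈ s
    · exact congrArg Subtype.val (DFunLike.congr_fun h1 ⟨x, hx⟩)
    · exact congrArg Subtype.val (DFunLike.congr_fun h2 ⟨x, Finset.mem_compl.mpr hx⟩)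
  have hcards := Fintype.card_le_of_injective F hFinj
  rw [Fintype.card_coe] at hcards
  refine hcards.trans_eq ?_
  rw [Fintype.card_prod, Fintype.card_embedding_eq, Fintype.card_embedding_eq]
  simp [Fintype.card_coe, hs, ht, Finset.card_compl, Nat.descFactorial_self]

private lemma contig_struct {n k : ℕ} (hk : 1 ≤ k) (s : Finset (Fin n)) (hC : Contig s)
    (hc : s.card = k) : ∃ a b : Fin n, s = Finset.Icc a b ∧ (b : ℕ) + 1 = (a : ℕ) + k ∧
      (s.min' (Finset.card_pos.mp (by omega)) : ℕ) = (a : ℕ) := by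
  obtain ⟨a, b, hab⟩ := hC
  have hcc : (b : ℕ) + 1 - (a : ℕ) = k := by rw [hab, Fin.card_Icc] at hc; exact hc
  have hba : (b : ℕ) + 1 = (a : ℕ) + k := by omega
  have hle : a ≤ b := by rw [Fin.le_def]; omega
  refine ⟨a, b, hab, hba, ?_⟩
  have hmin : s.min' (Finset.card_pos.mp (by omega)) = a := by
    apply le_antisymm
    · exact Finset.min'_le s a (by rw [hab]; exact Finset.mem_Icc.mpr ⟨le_refl a, hle⟩)
    · apply Finset.le_min'
      intro y hy
      rw [hab] at hy
      exact (Finset.mem_Icc.mp hy).1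
  rw [hmin]

private lemma contig_count (n k : ℕ) (hk : 1 ≤ k) :
    (Finset.univ.filter fun s : Finset (Fin n) => Contig s ∧ s.card = k).card
      ≤ n - k + 1 := by
  have h1 : (Finset.univ.filter fun s : Finset (Fin n) => Contig s ∧ s.card = k).card
      ≤ (Finset.range (n - k + 1)).card := by
    apply Finset.card_le_card_of_injOn
      (fun s : Finset (Fin n) => if h : s.Nonempty then ((s.min' h : Fin n) : ℕ) else 0)
    · intro s hs
      simp only [Finset.coe_filter, Set.mem_setOf_eq, Finset.mem_coe, Finset.mem_filter, Finset.mem_univ, true_and] at hs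
      obtain ⟨a, b, hab, hba, hmin⟩ := contig_struct hk s hs.1 hs.2
      have hne : s.Nonempty := Finset.card_pos.mp (by omega)
      have hbn : (b : ℕ) < n := b.isLt
      show (if h : s.Nonempty then ((s.min' h : Fin n) : ℕ) else 0) ∈ Finset.range (n - k + 1)
      rw [dif_pos hne, Finset.mem_range]
      have hval : ((s.min' hne : Fin n) : ℕ) = (a : ℕ) := hmin
      omega
    · intro s hs s' hs' hmins
      simp only [Finset.coe_filter, Set.mem_setOf_eq, Finset.mem_univ, true_and] at hs hs'
      obtain ⟨a, b, hab, hba, hmin⟩ := contig_struct hk s hs.1 hs.2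
      obtain ⟨a', b', hab', hba', hmin'⟩ := contig_struct hk s' hs'.1 hs'.2
      have hne : s.Nonempty := Finset.card_pos.mp (by omega)
      have hne' : s'.Nonempty := Finset.card_pos.mp (by omega)
      have hmins' : (if h : s.Nonempty then ((s.min' h : Fin n) : ℕ) else 0)
          = (if h : s'.Nonempty then ((s'.min' h : Fin n) : ℕ) else 0) := hmins
      rw [dif_pos hne, dif_pos hne'] at hmins'
      have hmins : ((s.min' hne : Fin n) : ℕ) = ((s'.min' hne' : Fin n) : ℕ) := hmins'
      have hv : ((s.min' hne : Fin n) : ℕ) = (a : ℕ) := hmin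
      have hv' : ((s'.min' hne' : Fin n) : ℕ) = (a' : ℕ) := hmin'
      have haa : (a : ℕ) = (a' : ℕ) := by omega
      have ha : a = a' := Fin.ext haa
      have hb : b = b' := Fin.ext (by omega)
      rw [hab, hab', ha, hb]
  simpa using h1

private lemma per_s {n k : ℕ} (hk : 1 ≤ k) (s : Finset (Fin n)) (hsc : s.card = k) :
    (Finset.univ.filter fun π : Equiv.Perm (Fin n) => Contig (s.image π)).card
      ≤ (n - k + 1) * (k.factorial * (n - k).factorial) := by
  have H : ∀ π ∈ (Finset.univ.filter fun π : Equiv.Perm (Fin n) => Contig (s.image π)),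
      s.image π ∈ (Finset.univ.filter fun t : Finset (Fin n) => Contig t ∧ t.card = k) := by
    intro π hπ
    simp only [Finset.mem_filter, Finset.mem_univ, true_and] at hπ ⊢
    exact ⟨hπ, by rw [Finset.card_image_of_injective _ π.injective, hsc]⟩
  rw [Finset.card_eq_sum_card_fiberwise H]
  refine le_trans (Finset.sum_le_sum
    (g := fun _ => k.factorial * (n - k).factorial) ?_) ?_
  · intro t ht
    simp only [Finset.mem_filter, Finset.mem_univ, true_and] at ht
    refine le_trans (Finset.card_le_card ?_) (fiber_card_le s t hsc ht.2)
    intro π hπ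
    simp only [Finset.mem_filter, Finset.mem_univ, true_and] at hπ ⊢
    exact hπ.2
  · rw [Finset.sum_const, smul_eq_mul]
    exact Nat.mul_le_mul_right _ (contig_count n k hk)

private lemma total (n k : ℕ) (hk : 1 ≤ k) :
    ∑ π : Equiv.Perm (Fin n),
      (Finset.univ.filter fun s : Finset (Fin n) => IsPInterval π s ∧ s.card = k).card
      ≤ (n - k + 1) * ((n - k + 1) * (k.factorial * (n - k).factorial)) := by
  have swap : ∑ π : Equiv.Perm (Fin n),
      (Finset.univ.filter fun s : Finset (Fin n) => IsPInterval π s ∧ s.card = k).card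
      = ∑ s : Finset (Fin n),
        (Finset.univ.filter fun π : Equiv.Perm (Fin n) => IsPInterval π s ∧ s.card = k).card := by
    simp only [Finset.card_filter]
    exact Finset.sum_comm
  rw [swap]
  have hzero : ∀ s : Finset (Fin n),
      s ∉ (Finset.univ.filter fun s : Finset (Fin n) => Contig s ∧ s.card = k) →
      (Finset.univ.filter fun π : Equiv.Perm (Fin n) => IsPInterval π s ∧ s.card = k).card = 0 := by
    intro s hs
    simp only [Finset.mem_filter, Finset.mem_univ, true_and, not_and_or] at hs
    rw [Finset.card_eq_zero]
    ext π
    simp only [Finset.mem_filter, Finset.mem_univ, true_and, Finset.notMem_empty, iff_false]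
    rintro ⟨⟨hc, _⟩, hcard⟩
    rcases hs with h | h
    · exact h hc
    · exact h hcard
  rw [← Finset.sum_subset (Finset.subset_univ _) (fun s _ hs => hzero s hs)]
  refine le_trans (Finset.sum_le_card_nsmul _ _
    ((n - k + 1) * (k.factorial * (n - k).factorial)) ?_) ?_
  · intro s hs
    simp only [Finset.mem_filter, Finset.mem_univ, true_and] at hs
    refine le_trans (Finset.card_le_card ?_) (per_s hk s hs.2)
    intro π hπ
    simp only [Finset.mem_filter, Finset.mem_univ, true_and] at hπ ⊢
    exact hπ.1.2
  · rw [smul_eq_mul]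
    exact Nat.mul_le_mul_right _ (contig_count n k hk)

private lemma arith2 {m n : ℕ} (hm : 2 ≤ m) (hn : m + 4 ≤ n) :
    n ^ 2 * ((m + 1) * ((m + 1) * m.factorial)) ≤ 24 * n.descFactorial m := by
  rcases Nat.lt_or_ge m 4 with h | h
  · interval_cases m
    · obtain ⟨b, rfl⟩ : ∃ b, n = b + 6 := ⟨n - 6, by omega⟩
      have e1 : b + 6 - 1 = b + 5 := by omega
      simp only [Nat.descFactorial_succ, Nat.descFactorial_zero, Nat.sub_zero, e1, mul_one]
      norm_num [Nat.factorial]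
      nlinarith [sq_nonneg b]
    · obtain ⟨b, rfl⟩ : ∃ b, n = b + 7 := ⟨n - 7, by omega⟩
      have e1 : b + 7 - 1 = b + 6 := by omega
      have e2 : b + 7 - 2 = b + 5 := by omega
      simp only [Nat.descFactorial_succ, Nat.descFactorial_zero, Nat.sub_zero, e1, e2, mul_one]
      norm_num [Nat.factorial]
      nlinarith [sq_nonneg b]
  · -- m ≥ 4
    have hsplit : (n - 4).descFactorial (m - 4) * n.descFactorial 4 = n.descFactorial m :=
      Nat.descFactorial_mul_descFactorial h
    have hmono : m.descFactorial (m - 4) ≤ (n - 4).descFactorial (m - 4) :=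
      Nat.descFactorial_le (m - 4) (by omega)
    have hfac : m.descFactorial (m - 4) * 24 = m.factorial := by
      have h0 := Nat.factorial_mul_descFactorial (show m - 4 ≤ m by omega)
      have h4 : m - (m - 4) = 4 := by omega
      rw [h4] at h0
      have : Nat.factorial 4 = 24 := by decide
      rw [this] at h0
      omega
    have hdF4 : n ^ 2 * ((m + 1) * (m + 1)) ≤ n.descFactorial 4 := by
      obtain ⟨t, rfl⟩ : ∃ t, n = m + 4 + t := ⟨n - (m + 4), by omega⟩
      have e1 : m + 4 + t - 1 = m + 3 + t := by omega
      have e2 : m + 4 + t - 2 = m + 2 + t := by omega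
      have e3 : m + 4 + t - 3 = m + 1 + t := by omega
      simp only [Nat.descFactorial_succ, Nat.descFactorial_zero, Nat.sub_zero, e1, e2, e3,
        mul_one]
      have A : (m + 1) * (m + 1) ≤ (m + 1 + t) * (m + 1 + t) :=
        Nat.mul_le_mul (by omega) (by omega)
      calc (m + 4 + t) ^ 2 * ((m + 1) * (m + 1))
          ≤ (m + 4 + t) ^ 2 * ((m + 1 + t) * (m + 1 + t)) := Nat.mul_le_mul_left _ A
        _ = ((m + 1 + t) * (m + 4 + t)) * ((m + 1 + t) * (m + 4 + t)) := by ring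
        _ ≤ ((m + 1 + t) * (m + 4 + t)) * ((m + 2 + t) * (m + 3 + t)) :=
            Nat.mul_le_mul_left _ (by nlinarith)
        _ = (m + 1 + t) * ((m + 2 + t) * ((m + 3 + t) * (m + 4 + t))) := by ring
    calc n ^ 2 * ((m + 1) * ((m + 1) * m.factorial))
        = (n ^ 2 * ((m + 1) * (m + 1))) * m.factorial := by ring
      _ ≤ n.descFactorial 4 * m.factorial := Nat.mul_le_mul_right _ hdF4
      _ = n.descFactorial 4 * (m.descFactorial (m - 4) * 24) := by rw [hfac]
      _ ≤ n.descFactorial 4 * ((n - 4).descFactorial (m - 4) * 24) :=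
          Nat.mul_le_mul_left _ (Nat.mul_le_mul_right _ hmono)
      _ = 24 * ((n - 4).descFactorial (m - 4) * n.descFactorial 4) := by ring
      _ = 24 * n.descFactorial m := by rw [hsplit]

private lemma arith (n k : ℕ) (h4 : 4 ≤ k) (hn : k + 2 ≤ n) :
    n ^ 2 * ((n - k + 1) * ((n - k + 1) * (k.factorial * (n - k).factorial)))
      ≤ 24 * n.factorial := by
  have hfac : k.factorial * n.descFactorial (n - k) = n.factorial := by
    have h0 := Nat.factorial_mul_descFactorial (show n - k ≤ n by omega)
    have : n - (n - k) = k := by omega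
    rwa [this] at h0
  have h2 := arith2 (show 2 ≤ n - k by omega) (show (n - k) + 4 ≤ n by omega)
  calc n ^ 2 * ((n - k + 1) * ((n - k + 1) * (k.factorial * (n - k).factorial)))
      = k.factorial * (n ^ 2 * ((n - k + 1) * ((n - k + 1) * (n - k).factorial))) := by ring
    _ ≤ k.factorial * (24 * n.descFactorial (n - k)) := Nat.mul_le_mul_left _ h2
    _ = 24 * (k.factorial * n.descFactorial (n - k)) := by ring
    _ = 24 * n.factorial := by rw [hfac]

/-- For `4 ≤ k ≤ n-2`, the expected number of intervals of length `k` in a uniformly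
random permutation of length `n` is at most `24/n^2`. -/
theorem stmt10 (n k : ℕ) (h4 : 4 ≤ k) (hk : k ≤ n - 2) :
    EX n k ≤ 24 / (n : ℝ)^2 := by
  have hn : k + 2 ≤ n := by omega
  have hk1 : 1 ≤ k := by omega
  have hnpos : (0 : ℝ) < (n : ℝ) := by exact_mod_cast (show 0 < n by omega)
  have hEX : EX n k = ((∑ π : Equiv.Perm (Fin n),
      (Finset.univ.filter fun s : Finset (Fin n) => IsPInterval π s ∧ s.card = k).card : ℕ) : ℝ)
      / (n.factorial : ℝ) := by
    unfold EX
    congr 1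
    rw [Nat.cast_sum]
    apply Finset.sum_congr rfl
    intro π _
    congr 1
    have hset : {s : Finset (Fin n) | IsPInterval π s ∧ s.card = k}
        = ↑(Finset.univ.filter fun s : Finset (Fin n) => IsPInterval π s ∧ s.card = k) := by
      ext s; simp
    rw [hset, Set.ncard_coe_finset]
  rw [hEX, div_le_div_iff₀ (by exact_mod_cast Nat.factorial_pos n) (by positivity)]
  have key : (∑ π : Equiv.Perm (Fin n),
      (Finset.univ.filter fun s : Finset (Fin n) => IsPInterval π s ∧ s.card = k).card) * n ^ 2
      ≤ 24 * n.factorial := by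
    calc (∑ π : Equiv.Perm (Fin n),
        (Finset.univ.filter fun s : Finset (Fin n) => IsPInterval π s ∧ s.card = k).card) * n ^ 2
        ≤ ((n - k + 1) * ((n - k + 1) * (k.factorial * (n - k).factorial))) * n ^ 2 :=
          Nat.mul_le_mul_right _ (total n k hk1)
      _ = n ^ 2 * ((n - k + 1) * ((n - k + 1) * (k.factorial * (n - k).factorial))) := by ring
      _ ≤ 24 * n.factorial := arith n k h4 hn
  exact_mod_cast key
end

section
/- For every m ≥ 2, every one-point deletion of the simple parallel alternation 2 4 6 ··· (2m) 1 3 5 ··· (2m−1) is order isomorphic to a non-simple permutation; i.e., this permutation is exceptional. -/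
def IsSimplePerm {n : ℕ} (π : Equiv.Perm (Fin n)) : Prop :=
  ∀ s : Finset (Fin n), IsPInterval π s → s.card ≤ 1 ∨ s = Finset.univ

lemma pair_not_simple {n : ℕ} (hn : 3 ≤ n) (τ : Equiv.Perm (Fin n)) (a b : Fin n)
    (hab : (b : ℕ) = (a : ℕ) + 1) (hlt : τ a < τ b)
    (hmid : ∀ c, ¬(τ a < τ c ∧ τ c < τ b)) : ¬ IsSimplePerm τ := by
  intro hs
  have hne : a ≠ b := by intro h; rw [h] at hab; omega
  have hs2 : ({a, b} : Finset (Fin n)) = Finset.Icc a b := by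
    ext x
    simp only [Finset.mem_insert, Finset.mem_singleton, Finset.mem_Icc, Fin.ext_iff, Fin.le_def]
    omega
  have himg : ({a, b} : Finset (Fin n)).image τ = Finset.Icc (τ a) (τ b) := by
    ext x
    simp only [Finset.mem_image, Finset.mem_insert, Finset.mem_singleton, Finset.mem_Icc]
    constructor
    · rintro ⟨c, (rfl | rfl), rfl⟩
      · exact ⟨le_refl _, le_of_lt hlt⟩
      · exact ⟨le_of_lt hlt, le_refl _⟩
    · rintro ⟨h1, h2⟩
      rcases eq_or_lt_of_le h1 with h | h
      · exact ⟨a, Or.inl rfl, h⟩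
      rcases eq_or_lt_of_le h2 with h' | h'
      · exact ⟨b, Or.inr rfl, h'.symm⟩
      exact (hmid (τ.symm x) ⟨by simpa using h, by simpa using h'⟩).elim
  rcases hs {a, b} ⟨⟨a, b, hs2⟩, ⟨τ a, τ b, himg⟩⟩ with h | h
  · rw [Finset.card_pair hne] at h; omega
  · have h2 : ({a, b} : Finset (Fin n)).card = 2 := Finset.card_pair hne
    rw [h, Finset.card_univ, Fintype.card_fin] at h2
    omega

lemma top_not_simple {n : ℕ} (hn : 3 ≤ n) (τ : Equiv.Perm (Fin n))
    (h : ∀ j : Fin n, (j : ℕ) ≠ n - 1 → τ j < τ ⟨n - 1, by omega⟩) : ¬ IsSimplePerm τ := by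
  intro hs
  set t : Fin n := ⟨n - 1, by omega⟩ with ht
  have htval : (t : ℕ) = n - 1 := rfl
  have htop : ∀ x : Fin n, x ≤ τ t := by
    intro x
    rcases eq_or_ne (τ.symm x) t with he | he
    · have h0 : τ (τ.symm x) = x := τ.apply_symm_apply x
      rw [he] at h0
      exact le_of_eq h0.symm
    · have h0 := h (τ.symm x) (fun hc => he (Fin.val_injective hc))
      rw [τ.apply_symm_apply] at h0
      exact le_of_lt h0
  have hτt : (τ t : ℕ) = n - 1 := by
    have h1 : (t : ℕ) ≤ (τ t : ℕ) := htop t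
    have h2 := (τ t).isLt
    omega
  have hmem : ∀ x : Fin n,
      x ∈ Finset.Icc (⟨0, by omega⟩ : Fin n) ⟨n - 2, by omega⟩ ↔ (x : ℕ) ≠ n - 1 := by
    intro x
    simp only [Finset.mem_Icc, Fin.le_def]
    have := x.isLt
    have e1 : ((⟨0, by omega⟩ : Fin n) : ℕ) = 0 := rfl
    have e2 : ((⟨n - 2, by omega⟩ : Fin n) : ℕ) = n - 2 := rfl
    omega
  set s : Finset (Fin n) := Finset.Icc ⟨0, by omega⟩ ⟨n - 2, by omega⟩ with hsdef
  have himg : s.image τ = s := by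
    ext x
    simp only [Finset.mem_image]
    rw [hmem x]
    constructor
    · rintro ⟨c, hc, rfl⟩
      rw [hmem c] at hc
      intro hx
      have hct : c = t := τ.injective (Fin.val_injective (by omega))
      rw [hct] at hc
      exact hc htval
    · intro hx
      refine ⟨τ.symm x, ?_, τ.apply_symm_apply x⟩
      rw [hmem]
      intro hc
      have hst : τ.symm x = t := Fin.val_injective (by omega)
      apply hx
      rw [← τ.apply_symm_apply x, hst, hτt]
  have hcard : s.card = n - 1 := by
    have hse : s = Finset.univ.erase t := by
      ext x
      rw [Finset.mem_erase, hmem]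
      simp only [Finset.mem_univ, and_true]
      simp only [ne_eq, Fin.ext_iff, htval]
    rw [hse, Finset.card_erase_of_mem (Finset.mem_univ t), Finset.card_univ, Fintype.card_fin]
  rcases hs s ⟨⟨_, _, hsdef⟩, ⟨_, _, himg.trans hsdef⟩⟩ with h' | h'
  · omega
  · have hmm : t ∈ s := h' ▸ Finset.mem_univ t
    rw [hmem] at hmm
    exact hmm htval

lemma bot_not_simple {n : ℕ} (hn : 3 ≤ n) (τ : Equiv.Perm (Fin n))
    (h : ∀ j : Fin n, (j : ℕ) ≠ 0 → τ ⟨0, by omega⟩ < τ j) : ¬ IsSimplePerm τ := by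
  intro hs
  set t : Fin n := ⟨0, by omega⟩ with ht
  have htval : (t : ℕ) = 0 := rfl
  have hbot : ∀ x : Fin n, τ t ≤ x := by
    intro x
    rcases eq_or_ne (τ.symm x) t with he | he
    · have h0 : τ (τ.symm x) = x := τ.apply_symm_apply x
      rw [he] at h0
      exact le_of_eq h0
    · have h0 := h (τ.symm x) (fun hc => he (Fin.val_injective hc))
      rw [τ.apply_symm_apply] at h0
      exact le_of_lt h0
  have hτt : (τ t : ℕ) = 0 := by
    have h1 : (τ t : ℕ) ≤ (t : ℕ) := hbot t
    omega
  have hmem : ∀ x : Fin n,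
      x ∈ Finset.Icc (⟨1, by omega⟩ : Fin n) ⟨n - 1, by omega⟩ ↔ (x : ℕ) ≠ 0 := by
    intro x
    simp only [Finset.mem_Icc, Fin.le_def]
    have := x.isLt
    have e1 : ((⟨1, by omega⟩ : Fin n) : ℕ) = 1 := rfl
    have e2 : ((⟨n - 1, by omega⟩ : Fin n) : ℕ) = n - 1 := rfl
    omega
  set s : Finset (Fin n) := Finset.Icc ⟨1, by omega⟩ ⟨n - 1, by omega⟩ with hsdef
  have himg : s.image τ = s := by
    ext x
    simp only [Finset.mem_image]
    rw [hmem x]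
    constructor
    · rintro ⟨c, hc, rfl⟩
      rw [hmem c] at hc
      intro hx
      have hct : c = t := τ.injective (Fin.val_injective (by omega))
      rw [hct] at hc
      exact hc htval
    · intro hx
      refine ⟨τ.symm x, ?_, τ.apply_symm_apply x⟩
      rw [hmem]
      intro hc
      have hst : τ.symm x = t := Fin.val_injective (by omega)
      apply hx
      rw [← τ.apply_symm_apply x, hst, hτt]
  have hcard : s.card = n - 1 := by
    have hse : s = Finset.univ.erase t := by
      ext x
      rw [Finset.mem_erase, hmem]
      simp only [Finset.mem_univ, and_true]
      simp only [ne_eq, Fin.ext_iff, htval]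
    rw [hse, Finset.card_erase_of_mem (Finset.mem_univ t), Finset.card_univ, Fintype.card_fin]
  rcases hs s ⟨⟨_, _, hsdef⟩, ⟨_, _, himg.trans hsdef⟩⟩ with h' | h'
  · omega
  · have hmm : t ∈ s := h' ▸ Finset.mem_univ t
    rw [hmem] at hmm
    exact hmm htval

set_option maxHeartbeats 1600000 in
/-- For every m ≥ 2, every one-point deletion of the simple parallel alternation
2 4 6 ⋯ (2m) 1 3 5 ⋯ (2m−1) is not simple; i.e. this permutation is exceptional.
Here τ is the pattern of π with the entry in position d removed. -/
theorem stmt17 (m : ℕ) (hm : 2 ≤ m) (π : Equiv.Perm (Fin (2 * m)))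
    (hπ : ∀ i : Fin (2 * m),
      ((i : ℕ) < m → (π i : ℕ) = 2 * (i : ℕ) + 1) ∧
      (m ≤ (i : ℕ) → (π i : ℕ) = 2 * ((i : ℕ) - m)))
    (d : Fin (2 * m)) (τ : Equiv.Perm (Fin (2 * m - 1)))
    (hτ : ∀ i j : Fin (2 * m - 1),
      τ i < τ j ↔
        π (if (i : ℕ) < (d : ℕ) then ⟨i, by omega⟩ else ⟨(i : ℕ) + 1, by omega⟩) <
        π (if (j : ℕ) < (d : ℕ) then ⟨j, by omega⟩ else ⟨(j : ℕ) + 1, by omega⟩)) :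
    ¬ IsSimplePerm τ := by
  have hn : 3 ≤ 2 * m - 1 := by omega
  have hval : ∀ c : Fin (2 * m - 1),
      ∃ q : ℕ, q < 2 * m ∧ q ≠ (d : ℕ) ∧
        ((c : ℕ) < (d : ℕ) ∧ q = (c : ℕ) ∨ (d : ℕ) ≤ (c : ℕ) ∧ q = (c : ℕ) + 1) ∧
        ((π (if (c : ℕ) < (d : ℕ) then ⟨(c : ℕ), by omega⟩ else ⟨(c : ℕ) + 1, by omega⟩) : Fin (2 * m)) : ℕ)
          = if q < m then 2 * q + 1 else 2 * (q - m) := by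
    intro c
    by_cases hc : (c : ℕ) < (d : ℕ)
    · refine ⟨(c : ℕ), by omega, by omega, Or.inl ⟨hc, rfl⟩, ?_⟩
      rw [if_pos hc]
      obtain ⟨h1, h2⟩ := hπ ⟨(c : ℕ), by omega⟩
      split_ifs with hq
      · exact h1 hq
      · refine h2 ?_; show m ≤ (c : ℕ); omega
    · refine ⟨(c : ℕ) + 1, by omega, by omega, Or.inr ⟨by omega, rfl⟩, ?_⟩
      rw [if_neg hc]
      obtain ⟨h1, h2⟩ := hπ ⟨(c : ℕ) + 1, by omega⟩
      split_ifs with hq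
      · exact h1 hq
      · refine h2 ?_; show m ≤ (c : ℕ) + 1; omega
  have hcomp : ∀ i j : Fin (2 * m - 1), τ i < τ j ↔
      ((π (if (i : ℕ) < (d : ℕ) then ⟨(i : ℕ), by omega⟩ else ⟨(i : ℕ) + 1, by omega⟩) : Fin (2 * m)) : ℕ) <
      ((π (if (j : ℕ) < (d : ℕ) then ⟨(j : ℕ), by omega⟩ else ⟨(j : ℕ) + 1, by omega⟩) : Fin (2 * m)) : ℕ) :=
    fun i j => (hτ i j).trans Fin.lt_def
  have key : ∀ i j : Fin (2 * m - 1), ∃ qi qj : ℕ,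
      qi < 2 * m ∧ qj < 2 * m ∧ qi ≠ (d : ℕ) ∧ qj ≠ (d : ℕ) ∧
      ((i : ℕ) < (d : ℕ) ∧ qi = (i : ℕ) ∨ (d : ℕ) ≤ (i : ℕ) ∧ qi = (i : ℕ) + 1) ∧
      ((j : ℕ) < (d : ℕ) ∧ qj = (j : ℕ) ∨ (d : ℕ) ≤ (j : ℕ) ∧ qj = (j : ℕ) + 1) ∧
      (τ i < τ j ↔
        (if qi < m then 2 * qi + 1 else 2 * (qi - m)) < (if qj < m then 2 * qj + 1 else 2 * (qj - m))) := by
    intro i j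
    obtain ⟨qi, h1, h2, h3, h4⟩ := hval i
    obtain ⟨qj, h5, h6, h7, h8⟩ := hval j
    exact ⟨qi, qj, h1, h5, h2, h6, h3, h7, by rw [hcomp, h4, h8]⟩
  clear hval hcomp hτ hπ
  rcases Nat.lt_or_ge ((d : ℕ) + 1) m with hd | hd
  · -- d ≤ m - 2 : interval at positions m+d-1, m+d with values 2d, 2d+2
    set a : Fin (2 * m - 1) := ⟨m + (d : ℕ) - 1, by omega⟩ with ha
    set b : Fin (2 * m - 1) := ⟨m + (d : ℕ), by omega⟩ with hb
    have hav : (a : ℕ) = m + (d : ℕ) - 1 := rfl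
    have hbv : (b : ℕ) = m + (d : ℕ) := rfl
    refine pair_not_simple hn τ a b (by omega) ?_ ?_
    · obtain ⟨qi, qj, h1, h2, h3, h4, h5, h6, h7⟩ := key a b
      rw [h7]
      split_ifs <;> omega
    · intro c ⟨hc1, hc2⟩
      obtain ⟨qi, qc, h1, h2, h3, h4, h5, h6, h7⟩ := key a c
      obtain ⟨qc', qj, g1, g2, g3, g4, g5, g6, g7⟩ := key c b
      rw [h7] at hc1
      rw [g7] at hc2
      have : qc = qc' := by omega
      subst this
      split_ifs at hc1 hc2 <;> omega
  rcases Nat.eq_or_lt_of_le hd with hd | hd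
  · -- d = m - 1 : last position carries the maximum
    refine top_not_simple hn τ ?_
    intro j hj
    set t : Fin (2 * m - 1) := ⟨2 * m - 1 - 1, by omega⟩ with htdef
    have htv : (t : ℕ) = 2 * m - 1 - 1 := rfl
    obtain ⟨qi, qj, h1, h2, h3, h4, h5, h6, h7⟩ := key j t
    rw [h7]
    split_ifs <;> omega
  have hd2 : m ≤ (d : ℕ) := by omega
  rcases Nat.eq_or_lt_of_le hd2 with hd' | hd'
  · -- d = m : first position carries the minimum
    refine bot_not_simple hn τ ?_
    intro j hj
    set t : Fin (2 * m - 1) := ⟨0, by omega⟩ with htdef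
    have htv : (t : ℕ) = 0 := rfl
    obtain ⟨qi, qj, h1, h2, h3, h4, h5, h6, h7⟩ := key t j
    rw [h7]
    split_ifs <;> omega
  · -- d ≥ m + 1 : interval at positions d-m-1, d-m
    set a : Fin (2 * m - 1) := ⟨(d : ℕ) - m - 1, by omega⟩ with ha
    set b : Fin (2 * m - 1) := ⟨(d : ℕ) - m, by omega⟩ with hb
    have hav : (a : ℕ) = (d : ℕ) - m - 1 := rfl
    have hbv : (b : ℕ) = (d : ℕ) - m := rfl
    refine pair_not_simple hn τ a b (by omega) ?_ ?_
    · obtain ⟨qi, qj, h1, h2, h3, h4, h5, h6, h7⟩ := key a b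
      rw [h7]
      split_ifs <;> omega
    · intro c ⟨hc1, hc2⟩
      obtain ⟨qi, qc, h1, h2, h3, h4, h5, h6, h7⟩ := key a c
      obtain ⟨qc', qj, g1, g2, g3, g4, g5, g6, g7⟩ := key c b
      rw [h7] at hc1
      rw [g7] at hc2
      have : qc = qc' := by omega
      subst this
      split_ifs at hc1 hc2 <;> omega
end

section
/- Every even permutation class (downset under pattern containment) that is not partially well-ordered contains a fundamental antichain: an infinite antichain A whose downward closure contains no infinite antichain other than subsets of A. -/
/-- Permutations of arbitrary (finite) length. -/
abbrev PermSig : Type := Σ n : ℕ, Equiv.Perm (Fin n)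

/-- Pattern containment: `σ ≤ π` iff `π` has a subsequence order isomorphic to `σ`. -/
def PatLE (σ π : PermSig) : Prop :=
  ∃ f : Fin σ.1 → Fin π.1, StrictMono f ∧
    ∀ i j : Fin σ.1, σ.2 i < σ.2 j ↔ π.2 (f i) < π.2 (f j)

/-- The (downward) closure `Sub(A)` of a set of permutations. -/
def SubCl (A : Set PermSig) : Set PermSig := {σ | ∃ π ∈ A, PatLE σ π}

/-- A set of permutations is partially well-ordered if every infinite sequence in it
contains an increasing pair (equivalently, it has no infinite antichain and no
infinite strictly decreasing sequence). -/
def IsPwoClass (C : Set PermSig) : Prop :=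
  ∀ g : ℕ → PermSig, (∀ k, g k ∈ C) → ∃ i j : ℕ, i < j ∧ PatLE (g i) (g j)


lemma patle_refl (σ : PermSig) : PatLE σ σ := ⟨id, strictMono_id, fun _ _ => Iff.rfl⟩

lemma patle_trans {σ π ρ : PermSig} (h1 : PatLE σ π) (h2 : PatLE π ρ) : PatLE σ ρ := by
  obtain ⟨f, hf, hf2⟩ := h1
  obtain ⟨g, hg, hg2⟩ := h2
  exact ⟨g ∘ f, hg.comp hf, fun i j => (hf2 i j).trans (hg2 (f i) (f j))⟩

lemma patle_size {σ π : PermSig} (h : PatLE σ π) : σ.1 ≤ π.1 := by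
  obtain ⟨f, hf, -⟩ := h
  simpa using Fintype.card_le_of_injective f hf.injective

lemma strictMono_fin_self {n : ℕ} {f : Fin n → Fin n} (hf : StrictMono f) : f = id := by
  have hsurj : Function.Surjective f :=
    Finite.surjective_of_injective hf.injective
  haveI : WellFoundedLT (Fin n) := inferInstance
  exact (hf.range_inj (strictMono_id (α := Fin n))).1
    (by rw [Set.range_id, Set.range_eq_univ.2 hsurj])

lemma patle_eq_of_size {σ π : PermSig} (h : PatLE σ π) (hs : π.1 ≤ σ.1) : σ = π := by
  obtain ⟨n, s⟩ := σ
  obtain ⟨m, p⟩ := π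
  obtain rfl : n = m := le_antisymm (patle_size h) hs
  obtain ⟨f, hf, hiff⟩ := h
  simp only at hf hiff
  have hfid : f = id := strictMono_fin_self hf
  subst hfid
  simp only [id] at hiff
  suffices hsp : s = p by rw [hsp]
  have hq : StrictMono (fun x => p (s.symm x)) := by
    intro x y hxy
    have := (hiff (s.symm x) (s.symm y)).1 (by simpa using hxy)
    simpa using this
  have := strictMono_fin_self hq
  ext i : 1
  have := congrFun this (s i)
  simpa using this.symm

lemma patle_antisymm {σ π : PermSig} (h1 : PatLE σ π) (h2 : PatLE π σ) : σ = π :=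
  patle_eq_of_size h1 (patle_size h2)

/-- `Good C F`: the finite set `F` extends to an infinite antichain inside `C`. -/
def Good (C : Set PermSig) (F : Set PermSig) : Prop :=
  ∃ T : Set PermSig, F ⊆ T ∧ T ⊆ C ∧ T.Infinite ∧ IsAntichain PatLE T

-- choose an element of minimal length satisfying `P` (junk value if none).
open Classical in
noncomputable def pickMin (P : PermSig → Prop) : PermSig :=
  if h : ∃ n : ℕ, ∃ x : PermSig, P x ∧ x.1 = n then (Nat.find_spec h).choose
  else ⟨0, 1⟩

open Classical in
lemma pickMin_spec {P : PermSig → Prop} (h : ∃ x, P x) :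
    P (pickMin P) ∧ ∀ y, P y → (pickMin P).1 ≤ y.1 := by
  have h' : ∃ n : ℕ, ∃ x : PermSig, P x ∧ x.1 = n := ⟨h.choose.1, h.choose, h.choose_spec, rfl⟩
  rw [pickMin, dif_pos h']
  obtain ⟨hP, hsz⟩ := (Nat.find_spec h').choose_spec
  refine ⟨hP, fun y hy => ?_⟩
  rw [hsz]
  exact Nat.find_le ⟨y, hy, rfl⟩

noncomputable def seqL (C : Set PermSig) : ℕ → List PermSig
  | 0 => []
  | n + 1 =>
    seqL C n ++ [pickMin (fun x => x ∉ seqL C n ∧ Good C (insert x {y | y ∈ seqL C n}))]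

noncomputable def seq (C : Set PermSig) (n : ℕ) : PermSig :=
  pickMin (fun x => x ∉ seqL C n ∧ Good C (insert x {y | y ∈ seqL C n}))

lemma seqL_succ (C : Set PermSig) (n : ℕ) : seqL C (n + 1) = seqL C n ++ [seq C n] := rfl

lemma seqL_set_succ (C : Set PermSig) (n : ℕ) :
    {y | y ∈ seqL C (n + 1)} = insert (seq C n) {y | y ∈ seqL C n} := by
  ext y
  simp [seqL_succ, or_comm]

lemma mem_seqL {C : Set PermSig} {x : PermSig} {n : ℕ} :
    x ∈ seqL C n ↔ ∃ k < n, seq C k = x := by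
  induction n with
  | zero => simp [seqL]
  | succ n ih =>
    simp only [seqL_succ, List.mem_append, List.mem_singleton, ih]
    constructor
    · rintro (⟨k, hk, rfl⟩ | rfl)
      · exact ⟨k, hk.trans (Nat.lt_succ_self n), rfl⟩
      · exact ⟨n, Nat.lt_succ_self n, rfl⟩
    · rintro ⟨k, hk, rfl⟩
      rcases Nat.lt_succ_iff_lt_or_eq.1 hk with hk' | rfl
      · exact Or.inl ⟨k, hk', rfl⟩
      · exact Or.inr rfl

lemma good_step {C S : Set PermSig} (h : Good C S) (hfin : S.Finite) :
    ∃ x, x ∉ S ∧ Good C (insert x S) := by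
  obtain ⟨T, hST, hTC, hTinf, hTa⟩ := h
  obtain ⟨x, hxT, hxS⟩ := (hTinf.diff hfin).nonempty
  exact ⟨x, hxS, T, Set.insert_subset hxT hST, hTC, hTinf, hTa⟩

lemma goodS {C : Set PermSig} (h0 : Good C ∅) : ∀ n, Good C {y | y ∈ seqL C n} := by
  intro n
  induction n with
  | zero => simpa [seqL] using h0
  | succ n ih =>
    have hfin : Set.Finite {y | y ∈ seqL C n} := (seqL C n).finite_toSet
    have hex := good_step ih hfin
    have := (pickMin_spec hex).1
    rw [seqL_set_succ]
    exact this.2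

lemma seq_spec {C : Set PermSig} (h0 : Good C ∅) (n : ℕ) :
    (seq C n ∉ seqL C n ∧ Good C (insert (seq C n) {y | y ∈ seqL C n})) ∧
      ∀ y, y ∉ seqL C n → Good C (insert y {y | y ∈ seqL C n}) → (seq C n).1 ≤ y.1 := by
  have hfin : Set.Finite {y | y ∈ seqL C n} := (seqL C n).finite_toSet
  have hex := good_step (goodS h0 n) hfin
  have H := pickMin_spec hex
  exact ⟨H.1, fun y h1 h2 => H.2 y ⟨h1, h2⟩⟩

lemma seq_mem_A {C : Set PermSig} (h0 : Good C ∅) (n : ℕ) : seq C n ∈ C := by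
  obtain ⟨⟨-, T, hsub, hTC, -, -⟩, -⟩ := seq_spec h0 n
  exact hTC (hsub (Set.mem_insert _ _))

lemma seq_injective {C : Set PermSig} (h0 : Good C ∅) : Function.Injective (seq C) := by
  intro i j hij
  by_contra hne
  wlog h : i < j generalizing i j
  · exact this hij.symm (Ne.symm hne) ((Ne.lt_or_gt hne).resolve_left h)
  have h1 : seq C i ∈ seqL C j := mem_seqL.2 ⟨i, h, rfl⟩
  have h2 : seq C j ∉ seqL C j := (seq_spec h0 j).1.1
  rw [← hij] at h2
  exact h2 h1

lemma seq_antichain {C : Set PermSig} (h0 : Good C ∅) :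
    IsAntichain PatLE (Set.range (seq C)) := by
  rintro x ⟨i, rfl⟩ y ⟨j, rfl⟩ hne hle
  set m := max i j + 1 with hm
  obtain ⟨⟨-, T, hsub, -, -, hTa⟩, -⟩ := seq_spec h0 m
  have hmem : ∀ k, k < m → seq C k ∈ T := fun k hk =>
    hsub (Set.mem_insert_of_mem _ (mem_seqL.2 ⟨k, hk, rfl⟩))
  exact hTa (hmem i (Nat.lt_succ_of_le (le_max_left i j)))
    (hmem j (Nat.lt_succ_of_le (le_max_right i j))) hne hle

/-- a non-pwo downset contains an infinite antichain. -/
lemma good_empty (C : Set PermSig) (hnpwo : ¬ IsPwoClass C) : Good C ∅ := by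
  rw [IsPwoClass] at hnpwo
  push_neg at hnpwo
  obtain ⟨g, hgC, hbad⟩ := hnpwo
  have hbad' : ∀ i j, i < j → ¬ PatLE (g i) (g j) := by
    intro i j hij hle
    exact (hbad i j hij) hle
  by_cases hcase : ∃ n, {k | (g k).1 = n}.Infinite
  · obtain ⟨n, hS⟩ := hcase
    have hinj : Set.InjOn g {k | (g k).1 = n} := by
      intro i hi j hj hij
      by_contra hne
      wlog h : i < j generalizing i j
      · exact this hj hi hij.symm (Ne.symm hne) ((Ne.lt_or_gt hne).resolve_left h)
      exact hbad' i j h (hij ▸ patle_refl (g i))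
    refine ⟨g '' {k | (g k).1 = n}, Set.empty_subset _, ?_, hS.image hinj, ?_⟩
    · rintro x ⟨k, -, rfl⟩; exact hgC k
    · rintro x ⟨i, hi, rfl⟩ y ⟨j, hj, rfl⟩ hne hle
      have : g i = g j := patle_eq_of_size hle
        (by simp only [Set.mem_setOf_eq] at hi hj; omega)
      exact hne this
  · push_neg at hcase
    have hbd : ∀ n, {k | (g k).1 ≤ n}.Finite := by
      intro n
      have : {k | (g k).1 ≤ n} ⊆ ⋃ m ∈ Finset.range (n + 1), {k | (g k).1 = m} := by
        intro k hk
        simp only [Set.mem_iUnion, Finset.mem_range]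
        exact ⟨(g k).1, Nat.lt_succ_of_le hk, rfl⟩
      exact (Set.Finite.biUnion (Finset.range (n + 1)).finite_toSet
        (fun m _ => hcase m)).subset this
    have key : ∀ m n : ℕ, ∃ j, m < j ∧ n < (g j).1 := by
      intro m n
      have hfin : ({k | k ≤ m} ∪ {k | (g k).1 ≤ n}).Finite :=
        (Set.finite_Iic m).union (hbd n)
      obtain ⟨j, hj⟩ := hfin.infinite_compl.nonempty
      simp only [Set.mem_compl_iff, Set.mem_union, Set.mem_setOf_eq, not_or, not_le] at hj
      exact ⟨j, hj.1, hj.2⟩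
    let φ : ℕ → ℕ := fun k => Nat.rec 0 (fun _ p => (key p (g p).1).choose) k
    have hφ : ∀ k, φ k < φ (k + 1) ∧ (g (φ k)).1 < (g (φ (k + 1))).1 := fun k =>
      (key (φ k) (g (φ k)).1).choose_spec
    have hmono : StrictMono φ := strictMono_nat_of_lt_succ (fun k => (hφ k).1)
    have hsz : StrictMono (fun k => (g (φ k)).1) :=
      strictMono_nat_of_lt_succ (fun k => (hφ k).2)
    have hinj : Function.Injective (g ∘ φ) := by
      intro i j hij
      by_contra hne
      wlog h : i < j generalizing i j
      · exact this hij.symm (Ne.symm hne) ((Ne.lt_or_gt hne).resolve_left h)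
      have h2 : (g (φ i)).1 < (g (φ j)).1 := hsz h
      simp only [Function.comp_apply] at hij
      have h3 : (g (φ i)).1 = (g (φ j)).1 := congrArg Sigma.fst hij
      omega
    refine ⟨Set.range (g ∘ φ), Set.empty_subset _, ?_, Set.infinite_range_of_injective hinj, ?_⟩
    · rintro x ⟨k, rfl⟩; exact hgC (φ k)
    · rintro x ⟨i, rfl⟩ y ⟨j, rfl⟩ hne hle
      rcases lt_trichotomy i j with h | rfl | h
      · exact hbad' (φ i) (φ j) (hmono h) hle
      · exact hne rfl
      · exact absurd (patle_size hle) (by simpa using hsz h)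

/-- Every permutation class (downset under pattern containment) that is not partially
well-ordered contains a fundamental antichain: an infinite antichain `A` such that every
infinite antichain contained in the closure `Sub(A)` is a subset of `A`. -/
theorem stmt19 (C : Set PermSig) (hC : ∀ σ π : PermSig, PatLE σ π → π ∈ C → σ ∈ C)
    (hnpwo : ¬ IsPwoClass C) :
    ∃ A : Set PermSig, A ⊆ C ∧ A.Infinite ∧ IsAntichain PatLE A ∧
      ∀ B : Set PermSig, B ⊆ SubCl A → B.Infinite → IsAntichain PatLE B → B ⊆ A := by
  classical
  have h0 : Good C ∅ := good_empty C hnpwo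
  set A : Set PermSig := Set.range (seq C) with hA
  have hAanti : IsAntichain PatLE A := seq_antichain h0
  have hAC : A ⊆ C := by rintro x ⟨n, rfl⟩; exact seq_mem_A h0 n
  have hSubClC : SubCl A ⊆ C := by
    rintro x ⟨π, hπ, hle⟩
    exact hC x π hle (hAC hπ)
  refine ⟨A, hAC, Set.infinite_range_of_injective (seq_injective h0), hAanti, ?_⟩
  intro B hBsub hBinf hBanti b hbB
  by_contra hbA
  have hEx : ∃ m, ∃ b' : PermSig, b' ∈ B ∧ b' ∉ A ∧ PatLE b' (seq C m) := by
    obtain ⟨π, hπA, hle⟩ := hBsub hbB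
    obtain ⟨m, rfl⟩ := hπA
    exact ⟨m, b, hbB, hbA, hle⟩
  set m := Nat.find hEx with hmdef
  obtain ⟨c, hcB, hcA, hcle⟩ := Nat.find_spec hEx
  have hmin : ∀ j, j < m → ∀ b' : PermSig, b' ∈ B → b' ∉ A → ¬ PatLE b' (seq C j) := by
    intro j hj b' h1 h2 h3
    exact Nat.find_min hEx hj ⟨b', h1, h2, h3⟩
  have hSmA : {y | y ∈ seqL C m} ⊆ A := by
    intro y hy
    obtain ⟨k, -, rfl⟩ := mem_seqL.1 hy
    exact ⟨k, rfl⟩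
  -- the key set: earlier terms together with B form an antichain
  have hGood : Good C (insert c {y | y ∈ seqL C m}) := by
    refine ⟨{y | y ∈ seqL C m} ∪ B, ?_, ?_, ?_, ?_⟩
    · exact Set.insert_subset (Or.inr hcB) Set.subset_union_left
    · exact Set.union_subset (fun y hy => hAC (hSmA hy)) (fun y hy => hSubClC (hBsub hy))
    · exact Set.Infinite.mono Set.subset_union_right hBinf
    · rintro x (hx | hx) y (hy | hy) hne hle
      · exact hAanti (hSmA hx) (hSmA hy) hne hle
      · -- x ∈ Sm ⊆ A, y ∈ B
        obtain ⟨π, hπA, hyle⟩ := hBsub hy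
        have hxA := hSmA hx
        by_cases hxy : x = π
        · subst hxy
          exact hne (patle_antisymm hle hyle)
        · exact hAanti hxA hπA hxy (patle_trans hle hyle)
      · -- x ∈ B, y ∈ Sm
        obtain ⟨j, hj, rfl⟩ := mem_seqL.1 hy
        by_cases hxA : x ∈ A
        · obtain ⟨i, rfl⟩ := hxA
          exact hAanti ⟨i, rfl⟩ ⟨j, rfl⟩ hne hle
        · exact hmin j hj x hx hxA hle
      · exact hBanti hx hy hne hle
  have hcS : c ∉ seqL C m := fun h => hcA (hSmA h)
  have h1 : (seq C m).1 ≤ c.1 := (seq_spec h0 m).2 c hcS hGood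
  have : c = seq C m := patle_eq_of_size hcle h1
  exact hcA ⟨m, this.symm⟩
end
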